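/- If n is a perfect totient number and 4n + 1 is prime, then 3(4n + 1) is also a perfect totient number. -/

import Mathlib

/-- `R n` is the least `k ≥ 1` with `φ^[k] n = 1`. -/
noncomputable def R (n : ℕ) : ℕ := sInf {k : ℕ | 1 ≤ k ∧ Nat.totient^[k] n = 1}

open Nat Finset

lemma exists_iter_one : ∀ n : ℕ, 1 ≤ n → ∃ k, 1 ≤ k ∧ Nat.totient^[k] n = 1 := by
  intro n
  induction n using Nat.strong_induction_on with
  | _ n ih =>
    intro hn
    rcases eq_or_lt_of_le hn with h | h
    · exact ⟨1, le_refl 1, by simp [← h]⟩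
    · obtain ⟨k, hk1, hk⟩ := ih (Nat.totient n) (Nat.totient_lt n h)
        (Nat.totient_pos.2 (by omega))
      exact ⟨k + 1, by omega, by rw [Function.iterate_succ_apply]; exact hk⟩

lemma R_mem {n : ℕ} (hn : 1 ≤ n) : 1 ≤ R n ∧ Nat.totient^[R n] n = 1 :=
  Nat.sInf_mem (exists_iter_one n hn)

lemma R_not_one {n : ℕ} {j : ℕ} (h1 : 1 ≤ j) (h2 : j < R n) :
    Nat.totient^[j] n ≠ 1 := by
  intro h
  exact Nat.notMem_of_lt_sInf h2 ⟨h1, h⟩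

lemma R_eq {m k : ℕ} (h1 : 1 ≤ k) (h2 : Nat.totient^[k] m = 1)
    (h3 : ∀ j, 1 ≤ j → j < k → Nat.totient^[j] m ≠ 1) : R m = k := by
  refine le_antisymm (Nat.sInf_le ⟨h1, h2⟩) ?_
  by_contra hlt
  push_neg at hlt
  have hm : 1 ≤ m := by
    by_contra hm
    interval_cases m
    · simp [Function.iterate_fixed Nat.totient_zero] at h2
  obtain ⟨hr1, hr2⟩ := R_mem hm
  exact h3 (R m) hr1 hlt hr2

lemma sum_top (f : ℕ → ℕ) (r : ℕ) :
    ∑ i ∈ Icc 1 (r + 1), f i = ∑ i ∈ Icc 1 r, f i + f (r + 1) := by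
  rw [← Finset.insert_Icc_right_eq_Icc_add_one (by omega : (1:ℕ) ≤ r + 1),
    Finset.sum_insert (by simp only [Finset.mem_Icc]; omega)]
  ring

lemma sum_shift (m : ℕ) : ∀ r : ℕ,
    ∑ i ∈ Icc 1 (r + 1), Nat.totient^[i] m
      = Nat.totient m + ∑ i ∈ Icc 1 r, Nat.totient^[i] (Nat.totient m) := by
  intro r
  induction r with
  | zero => simp
  | succ r ih =>
    rw [sum_top, ih, sum_top, Function.iterate_succ_apply]
    ring

lemma totient_half : ∀ m : ℕ, Even m → 2 * Nat.totient m ≤ m := by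
  intro m
  induction m using Nat.strong_induction_on with
  | _ m ih =>
    intro hm
    obtain ⟨k, hk⟩ := hm
    have hk2 : m = 2 * k := by omega
    rcases Nat.even_or_odd k with hke | hko
    · rcases Nat.eq_zero_or_pos k with rfl | hkpos
      · simp [hk2]
      · have h2 : Nat.totient (2 * k) = 2 * Nat.totient k :=
          Nat.totient_mul_of_prime_of_dvd Nat.prime_two hke.two_dvd
        have := ih k (by omega) hke
        rw [hk2, h2]; omega
    · have hco : Nat.Coprime 2 k := hko.coprime_two_left
      have h2 : Nat.totient (2 * k) = Nat.totient k := by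
        rw [Nat.totient_mul hco]; simp
      have := Nat.totient_le k
      rw [hk2, h2]; omega

lemma even_sum_lt : ∀ m : ℕ, 2 ≤ m → Even m →
    ∑ i ∈ Icc 1 (R m), Nat.totient^[i] m < m := by
  intro m
  induction m using Nat.strong_induction_on with
  | _ m ih =>
    intro hm2 hme
    rcases eq_or_lt_of_le hm2 with h | h
    · -- m = 2
      have hR : R m = 1 := R_eq (le_refl 1) (by simp [← h]) (by omega)
      rw [hR, ← h]
      simp
    · -- m > 2
      have hφe : Even (Nat.totient m) := Nat.totient_even h
      have hφpos : 0 < Nat.totient m := Nat.totient_pos.2 (by omega)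
      have hφ2 : 2 ≤ Nat.totient m := by
        rcases hφe with ⟨t, ht⟩; omega
      have hφlt : Nat.totient m < m := Nat.totient_lt m (by omega)
      obtain ⟨hr1, hr2⟩ := R_mem (n := Nat.totient m) (by omega)
      have hR : R m = R (Nat.totient m) + 1 := by
        refine R_eq (by omega) ?_ ?_
        · rw [Function.iterate_succ_apply]; exact hr2
        · intro j hj1 hj2 hj3
          rcases Nat.exists_eq_add_of_le hj1 with ⟨j', rfl⟩
          rw [add_comm, Function.iterate_succ_apply] at hj3
          rcases Nat.eq_zero_or_pos j' with rfl | hj'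
          · simp at hj3; omega
          · exact R_not_one hj' (by omega) hj3
      rw [hR, sum_shift]
      have := ih (Nat.totient m) hφlt hφ2 hφe
      have := totient_half m hme
      omega

lemma totient_four_mul {k : ℕ} (hk : Even k) :
    Nat.totient (4 * k) = 4 * Nat.totient k := by
  obtain ⟨t, ht⟩ := hk
  have hk2 : k = 2 * t := by omega
  have h1 : Nat.totient (2 * (2 * k)) = 2 * Nat.totient (2 * k) :=
    Nat.totient_mul_of_prime_of_dvd Nat.prime_two ⟨k, rfl⟩
  have h2 : Nat.totient (2 * k) = 2 * Nat.totient k :=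
    Nat.totient_mul_of_prime_of_dvd Nat.prime_two ⟨t, hk2⟩
  have : 4 * k = 2 * (2 * k) := by ring
  rw [this, h1, h2]; ring

lemma iter_pos {n : ℕ} (hn : 1 ≤ n) : ∀ i, 1 ≤ Nat.totient^[i] n := by
  intro i
  induction i with
  | zero => simpa
  | succ i ih =>
    rw [Function.iterate_succ_apply']
    exact Nat.totient_pos.2 ih

lemma iter_eight {n : ℕ} (hn : 1 ≤ n) (hodd : Odd n) :
    ∀ j, 1 ≤ j → j ≤ R n →
      Nat.totient^[j] (8 * n) = 4 * Nat.totient^[j] n := by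
  intro j
  induction j with
  | zero => omega
  | succ j ih =>
    intro _ hjR
    rcases Nat.eq_zero_or_pos j with rfl | hj1
    · -- base case j + 1 = 1
      have hco : Nat.Coprime 8 n := by
        have := Nat.Coprime.pow_left 3 hodd.coprime_two_left
        norm_num at this
        exact this
      simp only [zero_add, Function.iterate_one]
      rw [Nat.totient_mul hco]
      norm_num [show Nat.totient 8 = 4 from by decide]
    · have hjR' : j ≤ R n := by omega
      have hIH := ih hj1 hjR'
      -- φ^[j] n is even
      have hne1 : Nat.totient^[j] n ≠ 1 := R_not_one hj1 (by omega)
      have heven : Even (Nat.totient^[j] n) := by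
        rcases Nat.exists_eq_add_of_le hj1 with ⟨j', rfl⟩
        rw [add_comm, Function.iterate_succ_apply']
        rw [add_comm, Function.iterate_succ_apply'] at hne1
        have hpos : 1 ≤ Nat.totient^[j'] n := iter_pos hn j'
        by_cases hgt : 2 < Nat.totient^[j'] n
        · exact Nat.totient_even hgt
        · interval_cases h : Nat.totient^[j'] n <;> simp_all
      rw [Function.iterate_succ_apply', hIH, totient_four_mul heven,
        Function.iterate_succ_apply']

theorem ptn_three_mul (n : ℕ)
    (hptn : ∑ i ∈ Finset.Icc 1 (R n), Nat.totient^[i] n = n)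
    (hp : Nat.Prime (4 * n + 1)) :
    ∑ i ∈ Finset.Icc 1 (R (3 * (4 * n + 1))), Nat.totient^[i] (3 * (4 * n + 1))
      = 3 * (4 * n + 1) := by
  have hn1 : 1 ≤ n := by
    by_contra h
    have : n = 0 := by omega
    subst this
    exact Nat.not_prime_one hp
  have hodd : Odd n := by
    rcases Nat.even_or_odd n with he | ho
    · have := even_sum_lt n (by
        rcases he with ⟨t, ht⟩; omega) he
      omega
    · exact ho
  obtain ⟨hr1, hr2⟩ := R_mem hn1
  set r := R n with hrdef
  set m := 3 * (4 * n + 1) with hmdef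
  have hco3 : Nat.Coprime 3 (4 * n + 1) :=
    (Nat.coprime_primes Nat.prime_three hp).mpr (by omega)
  have hφm : Nat.totient m = 8 * n := by
    rw [hmdef, Nat.totient_mul hco3, Nat.totient_prime hp,
      show Nat.totient 3 = 2 from by decide]
    omega
  have hiter := iter_eight hn1 hodd
  -- values at r, r+1, r+2 of iterates of 8n
  have h8r : Nat.totient^[r] (8 * n) = 4 := by
    rw [hiter r hr1 le_rfl, hr2]
  have h8r1 : Nat.totient^[r + 1] (8 * n) = 2 := by
    rw [Function.iterate_succ_apply', h8r]
    decide
  have h8r2 : Nat.totient^[r + 2] (8 * n) = 1 := by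
    rw [show r + 2 = (r + 1) + 1 from rfl, Function.iterate_succ_apply', h8r1]
    decide
  -- iterates of m are shifted iterates of 8n
  have hmiter : ∀ j : ℕ, Nat.totient^[j + 1] m = Nat.totient^[j] (8 * n) := by
    intro j
    rw [Function.iterate_succ_apply, hφm]
  have hRm : R m = r + 3 := by
    refine R_eq (by omega) ?_ ?_
    · rw [show r + 3 = (r + 2) + 1 from rfl, hmiter]
      exact h8r2
    · intro j hj1 hj2 hj3
      rcases Nat.exists_eq_add_of_le hj1 with ⟨j', rfl⟩
      rw [add_comm 1 j', hmiter] at hj3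
      rcases Nat.eq_zero_or_pos j' with rfl | hj'
      · rw [Function.iterate_zero_apply] at hj3; omega
      · by_cases hle : j' ≤ r
        · rw [hiter j' hj' hle] at hj3
          omega
        · have : j' = r + 1 := by omega
          rw [this, h8r1] at hj3
          omega
  have hsplit : ∑ i ∈ Icc 1 (R m), Nat.totient^[i] m
      = Nat.totient m + ∑ i ∈ Icc 1 (r + 2), Nat.totient^[i] (8 * n) := by
    rw [hRm, show r + 3 = (r + 2) + 1 from rfl, sum_shift, hφm]
  have hsum2 : ∑ i ∈ Icc 1 (r + 2), Nat.totient^[i] (8 * n)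
      = (∑ i ∈ Icc 1 r, Nat.totient^[i] (8 * n)) + 2 + 1 := by
    rw [show r + 2 = (r + 1) + 1 from rfl, sum_top, sum_top,
      h8r1, show r + 1 + 1 = r + 2 from rfl, h8r2]
  have hsum3 : ∑ i ∈ Icc 1 r, Nat.totient^[i] (8 * n) = 4 * n := by
    have : ∀ i ∈ Icc 1 r, Nat.totient^[i] (8 * n) = 4 * Nat.totient^[i] n := by
      intro i hi
      rw [Finset.mem_Icc] at hi
      exact hiter i hi.1 hi.2
    rw [Finset.sum_congr rfl this, ← Finset.mul_sum, hptn]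
  rw [hsplit, hsum2, hsum3, hφm]
  ring
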